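/- arXiv:1603.07312 — 5 statements merged into one kernel-verified Lean document; each statement's English description precedes it below -/
import Mathlib

section
/- Let n ≥ 1, let F be a forest on the vertex set {1,…,n} (an acyclic set of edges of the complete graph K_n), and let w = (w_ℓ)_{ℓ∈F} with w_ℓ ∈ [0,1] for each edge ℓ of F. Then the symmetric n×n real matrix X^F(w) defined by X^F_{ii}(w) = 1 and, for i ≠ j, X^F_{ij}(w) = min{w_{ℓ'} : ℓ' on the unique path in F from i to j} if i and j are in the same connected component of F and X^F_{ij}(w) = 0 otherwise, is positive semidefinite. -/
open MeasureTheory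


/-- The graph on `Fin n` spanned by a finite set of edges. -/
def edgeGraph (n : ℕ) (F : Finset (Sym2 (Fin n))) : SimpleGraph (Fin n) :=
  SimpleGraph.fromEdgeSet (↑F : Set (Sym2 (Fin n)))

/-- A forest on `{1, …, n}`: a set of non-diagonal edges of the complete graph `K_n`
spanning an acyclic graph. -/
def IsForestKn (n : ℕ) (F : Finset (Sym2 (Fin n))) : Prop :=
  (∀ e ∈ F, ¬ e.IsDiag) ∧ (edgeGraph n F).IsAcyclic

/-- The matrix entry `X^F_{ij}(w)`: `1` on the diagonal, and for `i ≠ j` the minimum of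
`w_ℓ'` over the edges `ℓ'` of the unique path from `i` to `j` in the forest `F` if `i`
and `j` are `F`-connected, `0` otherwise.  (For `i ≠ j` this is expressed as the
supremum, over walks `p` from `i` to `j` in `F`, of the minimum of `w` over the edges
of `p`; in a forest every walk from `i` to `j` passes through all edges of the unique
path, so this supremum is exactly the minimum of `w` along that path, and the empty
supremum is `0` by convention when `i` and `j` are not connected.) -/
noncomputable def XF (n : ℕ) (F : Finset (Sym2 (Fin n))) (w : Sym2 (Fin n) → ℝ)
    (i j : Fin n) : ℝ :=
  if i = j then 1
  else sSup {m : ℝ | ∃ p : (edgeGraph n F).Walk i j, ∀ e ∈ p.edges, m ≤ w e}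

section Aux

variable {n : ℕ} {F : Finset (Sym2 (Fin n))} {w : Sym2 (Fin n) → ℝ}

lemma edge_mem_of_walk {i j : Fin n} (p : (edgeGraph n F).Walk i j)
    {e : Sym2 (Fin n)} (he : e ∈ p.edges) : e ∈ F := by
  have h := p.edges_subset_edgeSet he
  rw [edgeGraph, SimpleGraph.edgeSet_fromEdgeSet] at h
  exact h.1

lemma exists_edge_of_walk {i j : Fin n} (hij : i ≠ j) (p : (edgeGraph n F).Walk i j) :
    ∃ e, e ∈ p.edges := by
  cases p with
  | nil => exact absurd rfl hij
  | cons h q =>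
    rename_i v
    exact ⟨s(_, v), by rw [SimpleGraph.Walk.edges_cons]; exact List.mem_cons_self⟩

/-- The set appearing in `XF`. -/
def XS (n : ℕ) (F : Finset (Sym2 (Fin n))) (w : Sym2 (Fin n) → ℝ) (i j : Fin n) : Set ℝ :=
  {m : ℝ | ∃ p : (edgeGraph n F).Walk i j, ∀ e ∈ p.edges, m ≤ w e}

lemma XF_of_ne {i j : Fin n} (hij : i ≠ j) : XF n F w i j = sSup (XS n F w i j) := by
  rw [XF, if_neg hij]; rfl

lemma XS_bddAbove (hw : ∀ e ∈ F, 0 ≤ w e ∧ w e ≤ 1) {i j : Fin n} (hij : i ≠ j) :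
    (1 : ℝ) ∈ upperBounds (XS n F w i j) := by
  rintro m ⟨p, hp⟩
  obtain ⟨e, he⟩ := exists_edge_of_walk hij p
  exact (hp e he).trans (hw e (edge_mem_of_walk p he)).2

/-- min of `w` over the edges of a walk, with `1` as the empty value. -/
noncomputable def wval (w : Sym2 (Fin n) → ℝ) (l : List (Sym2 (Fin n))) : ℝ :=
  l.foldr (fun e r => min (w e) r) 1

lemma wval_le {l : List (Sym2 (Fin n))} {e : Sym2 (Fin n)} (he : e ∈ l) :
    wval w l ≤ w e := by
  induction l with
  | nil => simp at he
  | cons a l ih =>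
    rcases List.mem_cons.1 he with rfl | he
    · exact min_le_left _ _
    · exact (min_le_right _ _).trans (ih he)

lemma le_wval {l : List (Sym2 (Fin n))} {m : ℝ} (h1 : m ≤ 1) (h : ∀ e ∈ l, m ≤ w e) :
    m ≤ wval w l := by
  induction l with
  | nil => exact h1
  | cons a l ih =>
    exact le_min (h a List.mem_cons_self) (ih fun e he => h e (List.mem_cons_of_mem _ he))

lemma wval_mem (l : List (Sym2 (Fin n))) : wval w l = 1 ∨ ∃ e ∈ l, wval w l = w e := by
  induction l with
  | nil => exact Or.inl rfl
  | cons a l ih =>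
    rcases le_total (w a) (wval w l) with h | h
    · exact Or.inr ⟨a, List.mem_cons_self, (min_eq_left h).symm ▸ rfl⟩
    · have : wval w (a :: l) = wval w l := min_eq_right h
      rcases ih with h1 | ⟨e, he, h2⟩
      · exact Or.inl (this.trans h1)
      · exact Or.inr ⟨e, List.mem_cons_of_mem _ he, this.trans h2⟩

lemma XS_isGreatest (hw : ∀ e ∈ F, 0 ≤ w e ∧ w e ≤ 1) {i j : Fin n} (hij : i ≠ j)
    (hS : (XS n F w i j).Nonempty) : IsGreatest (XS n F w i j) (sSup (XS n F w i j)) := by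
  classical
  -- the set of walk-values
  set V : Set ℝ := {m : ℝ | ∃ p : (edgeGraph n F).Walk i j, m = wval w p.edges} with hV
  have hVfin : V.Finite := by
    apply Set.Finite.subset ((F.finite_toSet.image w).insert 1)
    rintro m ⟨p, rfl⟩
    rcases wval_mem (w := w) p.edges with h | ⟨e, he, h⟩
    · exact Set.mem_insert_iff.2 (Or.inl h)
    · exact Set.mem_insert_iff.2 (Or.inr ⟨e, edge_mem_of_walk p he, h.symm⟩)
  obtain ⟨m0, p0, hp0⟩ := hS
  have hVne : V.Nonempty := ⟨wval w p0.edges, p0, rfl⟩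
  obtain ⟨v, hvV, hvmax⟩ := Set.Finite.exists_maximalFor id V hVfin hVne
  have hvub : ∀ m ∈ XS n F w i j, m ≤ v := by
    rintro m ⟨p, hp⟩
    have hm1 : m ≤ 1 := by
      obtain ⟨e, he⟩ := exists_edge_of_walk hij p
      exact (hp e he).trans (hw e (edge_mem_of_walk p he)).2
    have h1 : m ≤ wval w p.edges := le_wval hm1 hp
    have h2 : wval w p.edges ≤ v := by
      rcases le_total (wval w p.edges) v with h | h
      · exact h
      · exact hvmax ⟨p, rfl⟩ h
    exact h1.trans h2
  obtain ⟨pv, hpv⟩ := hvV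
  have hvmem : v ∈ XS n F w i j := ⟨pv, fun e he => hpv ▸ wval_le he⟩
  have hg : IsGreatest (XS n F w i j) v := ⟨hvmem, hvub⟩
  rwa [hg.csSup_eq]

lemma XF_nonneg (hw : ∀ e ∈ F, 0 ≤ w e ∧ w e ≤ 1) (i j : Fin n) : 0 ≤ XF n F w i j := by
  rcases eq_or_ne i j with rfl | hij
  · simp [XF]
  rw [XF_of_ne hij]
  rcases (XS n F w i j).eq_empty_or_nonempty with h | h
  · rw [h, Real.sSup_empty]
  · obtain ⟨m, p, hp⟩ := h
    have h0 : (0 : ℝ) ∈ XS n F w i j :=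
      ⟨p, fun e he => (hw e (edge_mem_of_walk p he)).1⟩
    exact le_csSup ⟨1, XS_bddAbove hw hij⟩ h0

lemma XF_le_one (hw : ∀ e ∈ F, 0 ≤ w e ∧ w e ≤ 1) (i j : Fin n) : XF n F w i j ≤ 1 := by
  rcases eq_or_ne i j with rfl | hij
  · simp [XF]
  rw [XF_of_ne hij]
  rcases (XS n F w i j).eq_empty_or_nonempty with h | h
  · rw [h, Real.sSup_empty]; norm_num
  · exact csSup_le h fun m hm => XS_bddAbove hw hij hm

lemma XF_symm (i j : Fin n) : XF n F w i j = XF n F w j i := by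
  rcases eq_or_ne i j with rfl | hij
  · rfl
  rw [XF_of_ne hij, XF_of_ne hij.symm]
  congr 1
  ext m
  constructor
  · rintro ⟨p, hp⟩
    exact ⟨p.reverse, fun e he => hp e (by
      rwa [SimpleGraph.Walk.edges_reverse, List.mem_reverse] at he)⟩
  · rintro ⟨p, hp⟩
    exact ⟨p.reverse, fun e he => hp e (by
      rwa [SimpleGraph.Walk.edges_reverse, List.mem_reverse] at he)⟩

lemma XF_trans (hw : ∀ e ∈ F, 0 ≤ w e ∧ w e ≤ 1) {t : ℝ} {i j k : Fin n}
    (hij : t ≤ XF n F w i j) (hjk : t ≤ XF n F w j k) : t ≤ XF n F w i k := by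
  rcases eq_or_ne i k with rfl | hik
  · simp only [XF, if_pos rfl]
    exact hij.trans (XF_le_one hw i j)
  rcases eq_or_ne i j with rfl | hij'
  · exact hjk
  rcases eq_or_ne j k with rfl | hjk'
  · exact hij
  rw [XF_of_ne hij'] at hij
  rw [XF_of_ne hjk'] at hjk
  rcases (XS n F w i j).eq_empty_or_nonempty with h1 | h1
  · rw [h1, Real.sSup_empty] at hij
    exact hij.trans (XF_nonneg hw i k)
  rcases (XS n F w j k).eq_empty_or_nonempty with h2 | h2
  · rw [h2, Real.sSup_empty] at hjk
    exact hjk.trans (XF_nonneg hw i k)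
  obtain ⟨⟨p, hp⟩, -⟩ := XS_isGreatest hw hij' h1
  obtain ⟨⟨q, hq⟩, -⟩ := XS_isGreatest hw hjk' h2
  have hmem : t ∈ XS n F w i k := by
    refine ⟨p.append q, fun e he => ?_⟩
    rw [SimpleGraph.Walk.edges_append, List.mem_append] at he
    rcases he with he | he
    · exact hij.trans (hp e he)
    · exact hjk.trans (hq e he)
  rw [XF_of_ne hik]
  exact le_csSup ⟨1, XS_bddAbove hw hik⟩ hmem

lemma XF_self (i : Fin n) : XF n F w i i = 1 := by simp [XF]

end Aux

/-- **Positivity of the forest-interpolation matrices.**  For any forest `F` on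
`{1, …, n}` and any weights `w_ℓ ∈ [0,1]` on its edges, the symmetric matrix `X^F(w)`
is positive semidefinite. -/


theorem XF_posSemidef (n : ℕ) (hn : 1 ≤ n) (F : Finset (Sym2 (Fin n)))
    (hF : IsForestKn n F) (w : Sym2 (Fin n) → ℝ)
    (hw : ∀ e ∈ F, 0 ≤ w e ∧ w e ≤ 1) :
    ∀ x : Fin n → ℝ, 0 ≤ ∑ i, ∑ j, x i * XF n F w i j * x j := by
  classical
  intro x
  set s : Fin n → Fin n → ℝ := fun i j => XF n F w i j with hs
  -- indicator function
  set g : ℝ → Fin n → Fin n → ℝ := fun t i j => if t ≤ s i j then 1 else 0 with hg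
  -- each entry is the integral of its indicator
  have hent : ∀ i j : Fin n, s i j = ∫ t in Set.Ioc (0:ℝ) 1, g t i j := by
    intro i j
    have h1 : (fun t => g t i j) = (Set.Iic (s i j)).indicator (fun _ => (1:ℝ)) := by
      funext t
      by_cases h : t ≤ s i j <;> simp [hg, h, Set.indicator_apply, Set.mem_Iic]
    rw [h1, setIntegral_indicator measurableSet_Iic]
    rw [setIntegral_const]
    have h2 : Set.Ioc (0:ℝ) 1 ∩ Set.Iic (s i j) = Set.Ioc 0 (s i j) := by
      rw [Set.Ioc_inter_Iic, min_eq_right (XF_le_one hw i j)]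
    rw [h2, measureReal_def, Real.volume_Ioc, smul_eq_mul, mul_one, ENNReal.toReal_ofReal] <;>
      simpa using XF_nonneg hw i j
  -- integrability
  have hint : ∀ i j : Fin n,
      IntegrableOn (fun t => x i * x j * g t i j) (Set.Ioc (0:ℝ) 1) := by
    intro i j
    have h1 : (fun t => x i * x j * g t i j)
        = (Set.Iic (s i j)).indicator (fun _ => x i * x j) := by
      funext t
      by_cases h : t ≤ s i j <;> simp [hg, h, Set.indicator_apply, Set.mem_Iic]
    rw [h1]
    exact (integrableOn_const measure_Ioc_lt_top.ne).indicator measurableSet_Iic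
  -- pointwise nonnegativity of the indicator quadratic form
  have hpt : ∀ t ∈ Set.Ioc (0:ℝ) 1, 0 ≤ ∑ i, ∑ j, x i * x j * g t i j := by
    intro t ht
    have hrefl : ∀ i : Fin n, t ≤ s i i := fun i => by
      rw [hs]; simp only [XF_self]; exact ht.2
    have hsymm : ∀ i j : Fin n, s i j = s j i := fun i j => XF_symm i j
    -- representative of the class of i
    have hne : ∀ i : Fin n, (Finset.univ.filter (fun c => t ≤ s i c)).Nonempty :=
      fun i => ⟨i, Finset.mem_filter.2 ⟨Finset.mem_univ _, hrefl i⟩⟩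
    set r : Fin n → Fin n := fun i => (Finset.univ.filter (fun c => t ≤ s i c)).min' (hne i)
      with hr
    have hrmem : ∀ i : Fin n, t ≤ s i (r i) := fun i =>
      (Finset.mem_filter.1 (Finset.min'_mem _ (hne i))).2
    have hriff : ∀ i j : Fin n, (t ≤ s i j) ↔ r i = r j := by
      intro i j
      constructor
      · intro hij
        have : Finset.univ.filter (fun c => t ≤ s i c)
            = Finset.univ.filter (fun c => t ≤ s j c) := by
          ext c
          simp only [Finset.mem_filter, Finset.mem_univ, true_and]
          constructor
          · intro hic
            exact XF_trans hw (by rw [hsymm] at hij; exact hij) hic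
          · intro hjc
            exact XF_trans hw hij hjc
        simp only [hr, this]
      · intro hrij
        have h1 : t ≤ s i (r i) := hrmem i
        have h2 : t ≤ s j (r i) := by rw [hrij]; exact hrmem j
        exact XF_trans hw h1 (by rw [hsymm] at h2; exact h2)
    -- rewrite entries via the representative
    have hgr : ∀ i j : Fin n, g t i j = if r i = r j then 1 else 0 := by
      intro i j
      simp only [hg]
      exact if_congr (hriff i j) rfl rfl
    set y : Fin n → ℝ := fun c => ∑ i, if r i = c then x i else 0 with hy
    have key : ∑ i, ∑ j, x i * x j * g t i j = ∑ c, y c ^ 2 := by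
      have h1 : ∀ i j : Fin n, x i * x j * g t i j
          = ∑ c, (if r i = c then x i else 0) * (if r j = c then x j else 0) := by
        intro i j
        rw [hgr]
        simp only [ite_mul, zero_mul, mul_ite, mul_zero]
        rw [Finset.sum_ite_eq]
        simp only [Finset.mem_univ, if_true]
        by_cases h : r i = r j <;> simp [h, eq_comm, mul_ite, mul_zero, mul_one]
      calc ∑ i, ∑ j, x i * x j * g t i j
          = ∑ i, ∑ j, ∑ c, (if r i = c then x i else 0) * (if r j = c then x j else 0) := by
            refine Finset.sum_congr rfl fun i _ => Finset.sum_congr rfl fun j _ => h1 i j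
        _ = ∑ i, ∑ c, ∑ j, (if r i = c then x i else 0) * (if r j = c then x j else 0) := by
            refine Finset.sum_congr rfl fun i _ => Finset.sum_comm
        _ = ∑ c, ∑ i, ∑ j, (if r i = c then x i else 0) * (if r j = c then x j else 0) :=
            Finset.sum_comm
        _ = ∑ c, y c ^ 2 := by
            refine Finset.sum_congr rfl fun c _ => ?_
            rw [hy, sq, Finset.sum_mul_sum]
    rw [key]
    exact Finset.sum_nonneg fun c _ => sq_nonneg _
  -- assemble
  have hform : ∑ p : Fin n × Fin n, x p.1 * XF n F w p.1 p.2 * x p.2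
      = ∫ t in Set.Ioc (0:ℝ) 1, ∑ p : Fin n × Fin n, x p.1 * x p.2 * g t p.1 p.2 := by
    rw [MeasureTheory.integral_finset_sum (f := fun (p : Fin n × Fin n) t => x p.1 * x p.2 * g t p.1 p.2) Finset.univ (fun p _ => hint p.1 p.2)]
    refine Finset.sum_congr rfl fun p _ => ?_
    rw [MeasureTheory.integral_const_mul, ← hent p.1 p.2]
    ring
  have hps : ∑ i, ∑ j, x i * XF n F w i j * x j
      = ∑ p : Fin n × Fin n, x p.1 * XF n F w p.1 p.2 * x p.2 :=
    (Fintype.sum_prod_type' (f := fun i j => x i * XF n F w i j * x j)).symm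
  rw [hps, hform]
  refine setIntegral_nonneg measurableSet_Ioc fun t ht => ?_
  have h2 : ∑ p : Fin n × Fin n, x p.1 * x p.2 * g t p.1 p.2
      = ∑ i, ∑ j, x i * x j * g t i j :=
    Fintype.sum_prod_type' (f := fun i j => x i * x j * g t i j)
  rw [h2]
  exact hpt t ht
end

section
/- Let n ≥ 1, let F be a forest on {1,…,n} with edges ℓ_1,…,ℓ_k, and let w = (w_{ℓ_i}) ∈ [0,1]^k satisfy the ordering w_{ℓ_1} ≥ w_{ℓ_2} ≥ ⋯ ≥ w_{ℓ_k}. For 1 ≤ i ≤ k let Π_i be the partition of {1,…,n} into the connected components of the forest with edge set {ℓ_1,…,ℓ_i}, and let X^{Π_i} be the block matrix of Π_i. Then X^F(w) = (1 − w_{ℓ_1}) Id + Σ_{i=1}^{k−1} (w_{ℓ_i} − w_{ℓ_{i+1}}) X^{Π_i} + w_{ℓ_k} X^{Π_k}; in particular, on this sector X^F(w) is a convex barycentric combination of the identity and block partition matrices. -/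
open scoped Classical in
/-- The block matrix `X^Π` of the partition `Π` of `{1, …, n}` into the connected
components of the forest with edges `ℓ_1, …, ℓ_{i+1}` (here `E 0, …, E i`):
`X^Π_{ab} = 1` if `a` and `b` lie in the same block, `0` otherwise. -/
noncomputable def blockMat (n : ℕ) (E : ℕ → Sym2 (Fin n)) (i : ℕ) (a b : Fin n) : ℝ :=
  if (edgeGraph n ((Finset.range (i + 1)).image E)).Reachable a b then 1 else 0

private lemma edgeSet_edgeGraph (n : ℕ) (F : Finset (Sym2 (Fin n))) :
    (edgeGraph n F).edgeSet = ↑F \ {e | e.IsDiag} := by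
  simp [edgeGraph, SimpleGraph.edgeSet_fromEdgeSet]
  rfl

private lemma tele_sum (g : ℕ → ℝ) (m K : ℕ) (h : m ≤ K) :
    ∑ i ∈ Finset.range K, (g i - g (i + 1)) * (if m ≤ i then 1 else 0) = g m - g K := by
  induction K, h using Nat.le_induction with
  | base =>
    rw [Finset.sum_eq_zero, sub_self]
    intro i hi
    rw [Finset.mem_range] at hi
    rw [if_neg (by omega), mul_zero]
  | succ K hK ih =>
    rw [Finset.sum_range_succ, ih, if_pos hK]
    ring

/-- **Sector decomposition of `X^F(w)` as a barycentric combination of block matrices.**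
Let `F` be a forest with edges `ℓ_1, …, ℓ_k` (here `E 0, …, E (k-1)`) and let the
weights satisfy `1 ≥ w_{ℓ_1} ≥ ⋯ ≥ w_{ℓ_k} ≥ 0`.  With `Π_i` the partition of
`{1, …, n}` into connected components of `{ℓ_1, …, ℓ_i}`, one has
`X^F(w) = (1 - w_{ℓ_1}) Id + Σ_{i=1}^{k-1} (w_{ℓ_i} - w_{ℓ_{i+1}}) X^{Π_i} + w_{ℓ_k} X^{Π_k}`,
a convex barycentric combination of the identity and block partition matrices. -/
theorem XF_sector_decomposition (n k : ℕ) (hn : 1 ≤ n) (hk : 1 ≤ k)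
    (E : ℕ → Sym2 (Fin n))
    (hinj : ∀ i < k, ∀ j < k, E i = E j → i = j)
    (F : Finset (Sym2 (Fin n))) (hFE : F = (Finset.range k).image E)
    (hF : IsForestKn n F)
    (w : Sym2 (Fin n) → ℝ)
    (hw : ∀ i < k, 0 ≤ w (E i) ∧ w (E i) ≤ 1)
    (hmono : ∀ i j : ℕ, i ≤ j → j < k → w (E j) ≤ w (E i))
    (a b : Fin n) :
    XF n F w a b =
      (1 - w (E 0)) * (if a = b then 1 else 0)
        + ∑ i ∈ Finset.range (k - 1), (w (E i) - w (E (i + 1))) * blockMat n E i a b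
        + w (E (k - 1)) * blockMat n E (k - 1) a b := by
  classical
  have hEk : ∀ e ∈ F, ∃ i < k, E i = e := by
    intro e he
    rw [hFE, Finset.mem_image] at he
    obtain ⟨i, hi, hie⟩ := he
    exact ⟨i, Finset.mem_range.mp hi, hie⟩
  have hedgeSub : ∀ i : ℕ, i + 1 ≤ k →
      edgeGraph n ((Finset.range (i + 1)).image E) ≤ edgeGraph n F := by
    intro i hi
    rw [hFE]
    exact SimpleGraph.fromEdgeSet_mono
      (Finset.coe_subset.mpr (Finset.image_subset_image (Finset.range_subset_range.mpr hi)))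
  by_cases hab : a = b
  · subst hab
    have hblock : ∀ i, blockMat n E i a a = 1 := fun i => by
      rw [blockMat, if_pos (SimpleGraph.Reachable.refl a)]
    rw [XF, if_pos rfl, if_pos rfl]
    simp only [hblock, mul_one]
    rw [Finset.sum_range_sub' (fun i => w (E i)) (k - 1)]
    ring
  · rw [XF, if_neg hab]
    by_cases hr : (edgeGraph n F).Reachable a b
    · -- connected case
      obtain ⟨q⟩ := hr
      set p : (edgeGraph n F).Walk a b := (q.toPath : (edgeGraph n F).Path a b).val with hp
      have hp_isPath : p.IsPath := (q.toPath).property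
      have hpath_sub : ∀ r : (edgeGraph n F).Walk a b, ∀ e ∈ p.edges, e ∈ r.edges := by
        intro r e he
        have h1 : (⟨r.bypass, r.bypass_isPath⟩ : (edgeGraph n F).Path a b) = q.toPath :=
          hF.2.path_unique _ _
        have h2 : r.bypass = p := congrArg Subtype.val h1
        exact r.edges_bypass_subset (h2 ▸ he)
      have hpF : ∀ e ∈ p.edges, e ∈ F := by
        intro e he
        have := p.edges_subset_edgeSet he
        rw [edgeSet_edgeGraph] at this
        exact this.1
      have hne : p.edges ≠ [] := by
        intro h
        exact hab (p.eq_of_length_eq_zero (by rw [← SimpleGraph.Walk.length_edges, h]; rfl))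
      set T : Finset ℕ := (Finset.range k).filter (fun i => E i ∈ p.edges) with hT
      have hTne : T.Nonempty := by
        obtain ⟨e0, he0⟩ := List.exists_mem_of_ne_nil _ hne
        obtain ⟨i0, hi0k, hi0e⟩ := hEk e0 (hpF e0 he0)
        exact ⟨i0, Finset.mem_filter.2 ⟨Finset.mem_range.2 hi0k, hi0e ▸ he0⟩⟩
      set m := T.max' hTne with hm
      have hmT : m ∈ T := T.max'_mem hTne
      have hmk : m < k := Finset.mem_range.1 (Finset.mem_filter.1 hmT).1
      have hmE : E m ∈ p.edges := (Finset.mem_filter.1 hmT).2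
      have hidx : ∀ e ∈ p.edges, ∃ i ≤ m, E i = e := by
        intro e he
        obtain ⟨i, hik, hie⟩ := hEk e (hpF e he)
        have hiT : i ∈ T := Finset.mem_filter.2 ⟨Finset.mem_range.2 hik, hie ▸ he⟩
        exact ⟨i, T.le_max' i hiT, hie⟩
      -- the sup equals w (E m)
      have hub : ∀ x ∈ {m : ℝ | ∃ p : (edgeGraph n F).Walk a b, ∀ e ∈ p.edges, m ≤ w e},
          x ≤ w (E m) := by
        rintro x ⟨r, hrx⟩
        exact hrx _ (hpath_sub r _ hmE)
      have hmem : w (E m) ∈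
          {m : ℝ | ∃ p : (edgeGraph n F).Walk a b, ∀ e ∈ p.edges, m ≤ w e} := by
        refine ⟨p, fun e he => ?_⟩
        obtain ⟨i, him, hie⟩ := hidx e he
        rw [← hie]
        exact hmono i m him hmk
      have hsup : sSup {m : ℝ | ∃ p : (edgeGraph n F).Walk a b, ∀ e ∈ p.edges, m ≤ w e}
          = w (E m) :=
        le_antisymm (csSup_le ⟨_, hmem⟩ hub) (le_csSup ⟨_, hub⟩ hmem)
      have hblock : ∀ i : ℕ, i + 1 ≤ k →
          blockMat n E i a b = (if m ≤ i then 1 else 0) := by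
        intro i hik
        rw [blockMat]
        by_cases hmi : m ≤ i
        · rw [if_pos hmi, if_pos]
          refine ⟨p.transfer _ fun e he => ?_⟩
          rw [edgeSet_edgeGraph]
          have hnd := p.edges_subset_edgeSet he
          rw [edgeSet_edgeGraph] at hnd
          obtain ⟨j, hjm, hje⟩ := hidx e he
          exact ⟨Finset.mem_coe.2 (Finset.mem_image.2
            ⟨j, Finset.mem_range.2 (by omega), hje⟩), hnd.2⟩
        · rw [if_neg hmi, if_neg]
          rintro ⟨r'⟩
          have hr'F : ∀ e ∈ r'.edges, e ∈ (edgeGraph n F).edgeSet := by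
            intro e he
            have h3 := r'.edges_subset_edgeSet he
            rw [edgeSet_edgeGraph] at h3 ⊢
            obtain ⟨j, hj, hje⟩ := Finset.mem_image.1 (Finset.mem_coe.1 h3.1)
            rw [Finset.mem_range] at hj
            refine ⟨?_, h3.2⟩
            rw [hFE]
            exact Finset.mem_coe.2 (Finset.mem_image.2 ⟨j, Finset.mem_range.2 (by omega), hje⟩)
          have h1 : E m ∈ (r'.transfer (edgeGraph n F) hr'F).edges := hpath_sub _ _ hmE
          rw [SimpleGraph.Walk.edges_transfer] at h1
          have h2 := r'.edges_subset_edgeSet h1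
          rw [edgeSet_edgeGraph] at h2
          obtain ⟨j, hj, hje⟩ := Finset.mem_image.1 (Finset.mem_coe.1 h2.1)
          rw [Finset.mem_range] at hj
          have : j = m := hinj j (by omega) m hmk hje
          omega
      rw [hsup, if_neg hab, hblock (k - 1) (by omega), if_pos (by omega : m ≤ k - 1)]
      have hsum : ∑ i ∈ Finset.range (k - 1), (w (E i) - w (E (i + 1))) * blockMat n E i a b
          = ∑ i ∈ Finset.range (k - 1),
              (w (E i) - w (E (i + 1))) * (if m ≤ i then 1 else 0) := by
        refine Finset.sum_congr rfl fun i hi => ?_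
        rw [Finset.mem_range] at hi
        rw [hblock i (by omega)]
      rw [hsum, tele_sum (fun i => w (E i)) m (k - 1) (by omega)]
      ring
    · -- disconnected case
      have hSe : {m : ℝ | ∃ p : (edgeGraph n F).Walk a b, ∀ e ∈ p.edges, m ≤ w e} = ∅ := by
        ext x
        simp only [Set.mem_empty_iff_false, iff_false, Set.mem_setOf_eq, not_exists]
        intro r _
        exact hr ⟨r⟩
      have hblock : ∀ i : ℕ, i + 1 ≤ k → blockMat n E i a b = 0 := by
        intro i hi
        rw [blockMat, if_neg]
        intro h
        exact hr (h.mono (hedgeSub i hi))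
      rw [hSe, Real.sSup_empty, if_neg hab]
      rw [Finset.sum_eq_zero (fun i hi => by
        rw [Finset.mem_range] at hi
        rw [hblock i (by omega), mul_zero])]
      rw [hblock (k - 1) (by omega), mul_zero, mul_zero]
      ring
end

section
/- Let H be a complex Hilbert space and A a bounded self-adjoint operator on H. Let λ ∈ ℂ with λ ∉ (−∞, 0], written λ = ρ e^{iφ} with ρ > 0 and φ ∈ (−π, π), and let √λ = √ρ e^{iφ/2} denote the principal square root. Then the operator 1 − i√λ A is invertible and its inverse, the resolvent R = (1 − i√λ A)^{−1}, satisfies the operator norm bound ‖R‖ ≤ 1/cos(φ/2). -/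
/-- **Resolvent bound on the cardioid.**  Let `A` be a bounded self-adjoint operator on
a complex Hilbert space `H` and let `λ = ρ e^{iφ}` with `ρ > 0`, `φ ∈ (-π, π)`, so that
`√λ = √ρ e^{iφ/2}` is the principal square root.  Then `1 - i √λ A` is invertible and
the resolvent `R = (1 - i √λ A)⁻¹` satisfies `‖R‖ ≤ 1 / cos (φ/2)`. -/
theorem resolvent_bound (H : Type*) [NormedAddCommGroup H] [InnerProductSpace ℂ H]
    [CompleteSpace H] (A : H →L[ℂ] H) (hA : IsSelfAdjoint A)
    (ρ φ : ℝ) (hρ : 0 < ρ) (hφ : φ ∈ Set.Ioo (-Real.pi) Real.pi) :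
    ∃ Res : H →L[ℂ] H,
      ((1 : H →L[ℂ] H) - (Complex.I * (Real.sqrt ρ * Complex.exp (Complex.I * (φ / 2)))) • A)
          * Res = 1 ∧
      Res * ((1 : H →L[ℂ] H)
          - (Complex.I * (Real.sqrt ρ * Complex.exp (Complex.I * (φ / 2)))) • A) = 1 ∧
      ‖Res‖ ≤ 1 / Real.cos (φ / 2) := by
  set z : ℂ := Complex.I * (Real.sqrt ρ * Complex.exp (Complex.I * (φ / 2))) with hz
  have hsq : (0:ℝ) < Real.sqrt ρ := Real.sqrt_pos.mpr hρ
  have hc : 0 < Real.cos (φ / 2) := by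
    apply Real.cos_pos_of_mem_Ioo
    constructor <;> [linarith [hφ.1]; linarith [hφ.2]]
  have he : z = Complex.I * ((Real.sqrt ρ : ℂ) *
      ((Real.cos (φ / 2) : ℂ) + (Real.sin (φ / 2) : ℂ) * Complex.I)) := by
    rw [hz, show Complex.I * ((φ : ℂ) / 2) = ((φ / 2 : ℝ) : ℂ) * Complex.I by push_cast; ring,
      Complex.exp_mul_I, Complex.ofReal_cos, Complex.ofReal_sin]
  have hzre : z.re = -(Real.sqrt ρ * Real.sin (φ / 2)) := by
    rw [he]
    simp only [Complex.mul_re, Complex.mul_im, Complex.add_re, Complex.add_im,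
      Complex.I_re, Complex.I_im, Complex.ofReal_re, Complex.ofReal_im]
    ring
  have hzim : z.im = Real.sqrt ρ * Real.cos (φ / 2) := by
    rw [he]
    simp only [Complex.mul_re, Complex.mul_im, Complex.add_re, Complex.add_im,
      Complex.I_re, Complex.I_im, Complex.ofReal_re, Complex.ofReal_im]
    ring
  have hz0 : z ≠ 0 := by
    have him : z.im ≠ 0 := by rw [hzim]; positivity
    exact fun h => him (by rw [h]; simp)
  -- invertibility via spectrum
  have hspec : (z⁻¹ : ℂ) ∉ spectrum ℂ A := by
    intro hmem
    have h1 := hA.mem_spectrum_eq_re hmem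
    have hzr : z = ((z⁻¹).re : ℂ)⁻¹ := by rw [← h1, inv_inv]
    have h2 : z.im = 0 := by rw [hzr]; simp
    rw [hzim] at h2
    nlinarith
  have hu : IsUnit ((algebraMap ℂ (H →L[ℂ] H)) z⁻¹ - A) := spectrum.notMem_iff.mp hspec
  have hu2 : IsUnit ((1 : H →L[ℂ] H) - z • A) := by
    have h3 : (1 : H →L[ℂ] H) - z • A = z • ((algebraMap ℂ (H →L[ℂ] H)) z⁻¹ - A) := by
      rw [smul_sub, Algebra.algebraMap_eq_smul_one, smul_smul, mul_inv_cancel₀ hz0, one_smul]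
    rw [h3]
    exact (isUnit_smul_iff (Units.mk0 z hz0) _).mpr hu
  obtain ⟨u, huu⟩ := hu2
  refine ⟨↑u⁻¹, by rw [← huu]; exact u.mul_inv, by rw [← huu]; exact u.inv_mul, ?_⟩
  -- lower bound
  have key : ∀ y : H, Real.cos (φ / 2) * ‖y‖ ≤ ‖((1 : H →L[ℂ] H) - z • A) y‖ := by
    intro y
    rcases eq_or_ne y 0 with rfl | hy
    · simp
    · have hsym := hA.isSymmetric
      have hreal : (inner ℂ y (A y) : ℂ) = ((inner ℂ y (A y) : ℂ).re : ℂ) :=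
        (Complex.conj_eq_iff_re.mp ((inner_conj_symm (A y) y).trans (hsym y y))).symm
      set t : ℝ := (inner ℂ y (A y) : ℂ).re with ht
      have hinner : (inner ℂ y (((1 : H →L[ℂ] H) - z • A) y) : ℂ)
          = ((‖y‖^2 : ℝ) : ℂ) - z * t := by
        simp only [ContinuousLinearMap.sub_apply, ContinuousLinearMap.one_apply,
          ContinuousLinearMap.smul_apply, inner_sub_right, inner_smul_right]
        rw [hreal, inner_self_eq_norm_sq_to_K]
        push_cast
        rw [sub_eq_neg_add, sub_eq_neg_add]
        exact rfl
      have habs : Real.cos (φ / 2) * ‖y‖^2 ≤ ‖((‖y‖^2 : ℝ) : ℂ) - z * t‖ := by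
        have h2 : ‖((‖y‖^2 : ℝ) : ℂ) - z * t‖^2 = (‖y‖^2 - z.re * t)^2 + (z.im * t)^2 := by
          rw [Complex.sq_norm]
          simp only [Complex.normSq_apply, Complex.sub_re, Complex.sub_im, Complex.ofReal_re,
            Complex.ofReal_im, Complex.mul_re, Complex.mul_im]
          ring
        rw [hzre, hzim] at h2
        have h3 : (Real.cos (φ / 2) * ‖y‖^2)^2 ≤ ‖((‖y‖^2 : ℝ) : ℂ) - z * t‖^2 := by
          rw [h2]
          nlinarith [sq_nonneg (Real.sqrt ρ * t + ‖y‖^2 * Real.sin (φ / 2)),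
            Real.sin_sq_add_cos_sq (φ / 2), sq_nonneg (‖y‖^2), sq_nonneg (Real.sqrt ρ * t)]
        nlinarith [h3, norm_nonneg (((‖y‖^2 : ℝ) : ℂ) - z * t),
          mul_nonneg hc.le (sq_nonneg ‖y‖)]
      have hCS := norm_inner_le_norm (𝕜 := ℂ) y (((1 : H →L[ℂ] H) - z • A) y)
      rw [hinner] at hCS
      have hyp : 0 < ‖y‖ := norm_pos_iff.mpr hy
      have h4 := le_trans habs hCS
      nlinarith
  refine ContinuousLinearMap.opNorm_le_bound _ (by positivity) fun x => ?_
  have h1 := key ((↑u⁻¹ : H →L[ℂ] H) x)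
  have h2 : ((1 : H →L[ℂ] H) - z • A) ((↑u⁻¹ : H →L[ℂ] H) x) = x := by
    have h5 : (((1 : H →L[ℂ] H) - z • A) * ↑u⁻¹) x = x := by
      rw [← huu, u.mul_inv]; rfl
    simpa [ContinuousLinearMap.mul_apply] using h5
  rw [h2] at h1
  rw [div_mul_eq_mul_div, le_div_iff₀ hc]
  linarith
end

section
/- For N ≥ 1 an integer and z < 0 real, with Z(z,N) = ∫_{ℂ^N} e^{−‖φ‖² + (z/(2N))‖φ‖⁴} ∏_{p=1}^N (dRe φ_p dIm φ_p / π) and G_2(z,N) = Z(z,N)^{−1} ∫_{ℂ^N} (‖φ‖²/N) e^{−‖φ‖² + (z/(2N))‖φ‖⁴} ∏_{p=1}^N (dRe φ_p dIm φ_p / π), where ‖φ‖² = Σ_{p=1}^N |φ_p|², the function z ↦ log Z(z,N) is differentiable on (−∞,0) and the Schwinger–Dyson identity holds: G_2(z,N) = 1 + 2z · d/dz [ (1/N) log Z(z,N) ] for every z < 0. -/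
open MeasureTheory Real Set Filter

/-- The partition function of the quartic complex `N`-vector model:
`Z(z,N) = ∫_{ℂ^N} e^{-‖φ‖² + (z/(2N))‖φ‖⁴} ∏ₚ (dReφₚ dImφₚ / π)`. -/
noncomputable def Zvec (N : ℕ) (z : ℝ) : ℝ :=
  (Real.pi ^ N)⁻¹ *
    ∫ φ : Fin N → ℂ,
      Real.exp (-(∑ p, ‖φ p‖ ^ 2)
        + z / (2 * N) * (∑ p, ‖φ p‖ ^ 2) ^ 2)

/-- The two-point function of the quartic complex `N`-vector model:
`G₂(z,N) = Z(z,N)⁻¹ ∫_{ℂ^N} (‖φ‖²/N) e^{-‖φ‖² + (z/(2N))‖φ‖⁴} ∏ₚ (dReφₚ dImφₚ / π)`. -/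
noncomputable def G2vec (N : ℕ) (z : ℝ) : ℝ :=
  (Zvec N z)⁻¹ *
    ((Real.pi ^ N)⁻¹ *
      ∫ φ : Fin N → ℂ,
        ((∑ p, ‖φ p‖ ^ 2) / N) *
          Real.exp (-(∑ p, ‖φ p‖ ^ 2)
            + z / (2 * N) * (∑ p, ‖φ p‖ ^ 2) ^ 2))


private lemma sd_integrable (m : ℕ) {c : ℝ} (hc : c ≤ 0) :
    IntegrableOn (fun y : ℝ => y ^ m * Real.exp (-(y ^ 2) + c * (y ^ 2) ^ 2)) (Ioi 0) := by
  have h1 : IntegrableOn (fun y : ℝ => y ^ (m : ℝ) * Real.exp (-1 * y ^ 2)) (Ioi 0) :=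
    integrableOn_rpow_mul_exp_neg_mul_sq one_pos (lt_of_lt_of_le neg_one_lt_zero (Nat.cast_nonneg m))
  refine h1.mono' (Continuous.aestronglyMeasurable (by fun_prop)) ?_
  filter_upwards [ae_restrict_mem measurableSet_Ioi] with y hy
  have hy0 : (0:ℝ) < y := hy
  rw [norm_mul, norm_pow, Real.norm_eq_abs, abs_of_pos hy0, Real.norm_eq_abs, Real.abs_exp,
    ← Real.rpow_natCast y m]
  have h2 : -(y^2) + c*(y^2)^2 ≤ -1 * y^2 := by nlinarith [sq_nonneg (y^2)]
  exact mul_le_mul_of_nonneg_left (Real.exp_le_exp.2 h2) (Real.rpow_nonneg hy0.le _)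

private lemma sd_pos (m : ℕ) {c : ℝ} (hc : c ≤ 0) :
    0 < ∫ y in Ioi (0:ℝ), y ^ m * Real.exp (-(y ^ 2) + c * (y ^ 2) ^ 2) := by
  rw [setIntegral_pos_iff_support_of_nonneg_ae ?_ (sd_integrable m hc)]
  · refine lt_of_lt_of_le (b := volume (Ioi (0:ℝ))) ?_ (measure_mono (fun y hy => ?_))
    · simp [Real.volume_Ioi]
    · exact ⟨ne_of_gt (mul_pos (pow_pos hy m) (Real.exp_pos _)), hy⟩
  · filter_upwards [ae_restrict_mem measurableSet_Ioi] with y hy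
    exact mul_nonneg (pow_nonneg (le_of_lt hy) m) (Real.exp_pos _).le

private lemma sd_reduce (M : ℕ) (g : ℝ → ℝ) :
    ∫ φ : Fin (M + 1) → ℂ, g (∑ p, ‖φ p‖ ^ 2)
      = ((2 * (M + 1) : ℕ) : ℝ) *
          ((volume (Metric.ball (0 : EuclideanSpace ℝ (Fin (M + 1) ⊕ Fin (M + 1))) 1)).toReal *
            ∫ y in Ioi (0 : ℝ), y ^ (2 * M + 1) * g (y ^ 2)) := by
  classical
  have h₁ : MeasurePreserving
      (⇑(MeasurableEquiv.piCongrRight (fun _ : Fin (M + 1) => Complex.measurableEquivRealProd)))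
      volume volume :=
    volume_preserving_pi fun _ => Complex.volume_preserving_equiv_real_prod
  have h₂ := volume_measurePreserving_arrowProdEquivProdArrow ℝ ℝ (Fin (M + 1))
  have h₃ := volume_measurePreserving_sumPiEquivProdPi_symm
      (fun _ : Fin (M + 1) ⊕ Fin (M + 1) => ℝ)
  have h₄ := EuclideanSpace.volume_preserving_symm_measurableEquiv_toLp (Fin (M + 1) ⊕ Fin (M + 1))
  haveI : Nontrivial (EuclideanSpace ℝ (Fin (M + 1) ⊕ Fin (M + 1))) :=
    Module.nontrivial_of_finrank_pos (R := ℝ)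
      (by rw [finrank_euclideanSpace]; simp)
  calc ∫ φ : Fin (M + 1) → ℂ, g (∑ p, ‖φ p‖ ^ 2)
      = ∫ x : Fin (M + 1) → ℝ × ℝ, g (∑ p, ((x p).1 ^ 2 + (x p).2 ^ 2)) := by
        rw [← h₁.integral_comp'
          (g := fun x : Fin (M + 1) → ℝ × ℝ => g (∑ p, ((x p).1 ^ 2 + (x p).2 ^ 2)))]
        congr 1
        funext φ
        simp [MeasurableEquiv.piCongrRight, Equiv.piCongrRight, Complex.sq_norm,
          Complex.normSq_apply, ← pow_two]
    _ = ∫ x : (Fin (M + 1) → ℝ) × (Fin (M + 1) → ℝ), g (∑ p, ((x.1 p) ^ 2 + (x.2 p) ^ 2)) := by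
        rw [← h₂.integral_comp'
          (g := fun x : (Fin (M + 1) → ℝ) × (Fin (M + 1) → ℝ) =>
            g (∑ p, ((x.1 p) ^ 2 + (x.2 p) ^ 2)))]
        congr 1
    _ = ∫ x : (Fin (M + 1) ⊕ Fin (M + 1)) → ℝ, g (∑ i, (x i) ^ 2) := by
        rw [← h₃.integral_comp'
          (g := fun x : (Fin (M + 1) ⊕ Fin (M + 1)) → ℝ => g (∑ i, (x i) ^ 2))]
        congr 1
        funext x
        simp [MeasurableEquiv.sumPiEquivProdPi, Equiv.sumPiEquivProdPi,
          Fintype.sum_sum_type, Finset.sum_add_distrib]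
    _ = ∫ x : EuclideanSpace ℝ (Fin (M + 1) ⊕ Fin (M + 1)), g (‖x‖ ^ 2) := by
        rw [← h₄.integral_comp'
          (g := fun x : (Fin (M + 1) ⊕ Fin (M + 1)) → ℝ => g (∑ i, (x i) ^ 2))]
        congr 1
        funext x
        congr 1
        rw [EuclideanSpace.norm_eq, Real.sq_sqrt (by positivity)]
        simp [Real.norm_eq_abs, sq_abs]
    _ = _ := by
        have hvol := integral_fun_norm_addHaar
          (volume : Measure (EuclideanSpace ℝ (Fin (M + 1) ⊕ Fin (M + 1)))) (fun r => g (r ^ 2))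
        have hdim : Module.finrank ℝ (EuclideanSpace ℝ (Fin (M + 1) ⊕ Fin (M + 1)))
            = 2 * (M + 1) := by
          rw [finrank_euclideanSpace]; simp; ring
        rw [hvol, hdim]
        rw [show 2 * (M + 1) - 1 = 2 * M + 1 by omega]
        simp only [nsmul_eq_mul, smul_eq_mul, measureReal_def]

private lemma sd_ibp (M : ℕ) (z : ℝ) (hz : z < 0) :
    (2 * ((M+1:ℕ):ℝ)) * ∫ y in Ioi (0:ℝ), y ^ (2*M+3) * Real.exp (-(y^2) + z/(2*((M+1:ℕ):ℝ))*(y^2)^2)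
      = 2 * ((M+1:ℕ):ℝ) * ((M+1:ℕ):ℝ) *
          (∫ y in Ioi (0:ℝ), y ^ (2*M+1) * Real.exp (-(y^2) + z/(2*((M+1:ℕ):ℝ))*(y^2)^2))
        + 2 * z * ∫ y in Ioi (0:ℝ), y ^ (2*M+5) * Real.exp (-(y^2) + z/(2*((M+1:ℕ):ℝ))*(y^2)^2) := by
  set Nr : ℝ := ((M+1:ℕ):ℝ) with hNrdef
  have hNr : (0:ℝ) < Nr := by positivity
  have hc : z / (2*Nr) < 0 := div_neg_of_neg_of_pos hz (by positivity)
  set c : ℝ := z / (2*Nr) with hcdef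
  have hint : ∀ m : ℕ, IntegrableOn (fun y : ℝ => y ^ m * Real.exp (-(y^2) + c*(y^2)^2)) (Ioi 0) :=
    fun m => sd_integrable m hc.le
  -- derivative of the antiderivative
  have hF : ∀ y : ℝ, HasDerivAt (fun y => y^(2*M+2) * Real.exp (-(y^2)+c*(y^2)^2))
      (((2*M+2 : ℕ) : ℝ) * (y^(2*M+1) * Real.exp (-(y^2)+c*(y^2)^2))
        - 2 * (y^(2*M+3) * Real.exp (-(y^2)+c*(y^2)^2))
        + 4*c * (y^(2*M+5) * Real.exp (-(y^2)+c*(y^2)^2))) y := by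
    intro y
    have h1 : HasDerivAt (fun y : ℝ => -(y^2) + c*(y^2)^2) (-2*y + 4*c*y^3) y := by
      have h := ((hasDerivAt_pow 2 y).neg).add (((hasDerivAt_pow 2 y).pow 2).const_mul c)
      refine h.congr_deriv ?_
      norm_num
      ring
    have h2 := (hasDerivAt_pow (2*M+2) y).mul h1.exp
    refine h2.congr_deriv ?_
    rw [show 2*M+2-1 = 2*M+1 from rfl]
    push_cast
    ring
  -- decay at infinity
  have h0 : Tendsto (fun y : ℝ => y^(2*M+2) * Real.exp (-(y^2) + c*(y^2)^2)) atTop (nhds 0) := by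
    have hG : Tendsto (fun y : ℝ => (y^2)^(M+1) * Real.exp (-(y^2))) atTop (nhds 0) := by
      have := (tendsto_pow_mul_exp_neg_atTop_nhds_zero (M+1)).comp
        (tendsto_pow_atTop (n := 2) two_ne_zero)
      simpa [Function.comp_def] using this
    refine squeeze_zero' ?_ ?_ hG
    · filter_upwards [eventually_ge_atTop (0:ℝ)] with y hy
      positivity
    · filter_upwards [eventually_ge_atTop (0:ℝ)] with y hy
      have hle : Real.exp (-(y^2) + c*(y^2)^2) ≤ Real.exp (-(y^2)) :=
        Real.exp_le_exp.2 (by nlinarith [sq_nonneg (y^2)])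
      calc y^(2*M+2) * Real.exp (-(y^2) + c*(y^2)^2)
          ≤ y^(2*M+2) * Real.exp (-(y^2)) := mul_le_mul_of_nonneg_left hle (pow_nonneg hy _)
        _ = (y^2)^(M+1) * Real.exp (-(y^2)) := by ring
  have key := integral_Ioi_of_hasDerivAt_of_tendsto' (a := 0) (fun y _ => hF y) ?_ h0
  · have i12 : IntegrableOn (fun y : ℝ =>
        ((2*M+2:ℕ):ℝ) * (y^(2*M+1) * Real.exp (-(y^2)+c*(y^2)^2))
          - 2 * (y^(2*M+3) * Real.exp (-(y^2)+c*(y^2)^2))) (Ioi 0) :=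
      ((hint (2*M+1)).const_mul _).sub ((hint (2*M+3)).const_mul _)
    rw [integral_add i12 ((hint (2*M+5)).const_mul _),
      integral_sub ((hint (2*M+1)).const_mul _) ((hint (2*M+3)).const_mul _),
      integral_const_mul, integral_const_mul, integral_const_mul] at key
    rw [show ((0:ℝ)^(2*M+2) * Real.exp (-((0:ℝ)^2)+c*((0:ℝ)^2)^2)) = 0 by norm_num] at key
    set I1 := ∫ y in Ioi (0:ℝ), y ^ (2*M+1) * Real.exp (-(y^2) + c*(y^2)^2) with hI1def
    set I3 := ∫ y in Ioi (0:ℝ), y ^ (2*M+3) * Real.exp (-(y^2) + c*(y^2)^2) with hI3def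
    set I5 := ∫ y in Ioi (0:ℝ), y ^ (2*M+5) * Real.exp (-(y^2) + c*(y^2)^2) with hI5def
    rw [hcdef] at key
    rw [hNrdef] at key ⊢
    push_cast at key ⊢
    have hco : (((M:ℝ)+1)) * (4*(z/(2*((M:ℝ)+1)))) = 2*z := by
      have hM0 : ((M:ℝ)+1) ≠ 0 := by positivity
      field_simp
      ring
    linear_combination (-(M:ℝ)-1) * key + I5 * hco
  · exact ((((hint (2*M+1)).const_mul _).sub ((hint (2*M+3)).const_mul _))).add
      ((hint (2*M+5)).const_mul _)

/-- **Schwinger–Dyson identity for the quartic vector model.**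
For `N ≥ 1`, the function `z ↦ log Z(z,N)` is differentiable on `(-∞,0)` and
`G₂(z,N) = 1 + 2z · d/dz [(1/N) log Z(z,N)]` for every `z < 0`. -/
theorem G2vec_schwinger_dyson (N : ℕ) (hN : 1 ≤ N) (z : ℝ) (hz : z < 0) :
    DifferentiableAt ℝ (fun y => Real.log (Zvec N y)) z ∧
      G2vec N z = 1 + 2 * z * deriv (fun y => (1 / N : ℝ) * Real.log (Zvec N y)) z := by
  obtain ⟨M, rfl⟩ : ∃ M, N = M + 1 := ⟨N - 1, (Nat.succ_pred_eq_of_pos hN).symm⟩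
  clear hN
  have hNr : (0:ℝ) < ((M+1:ℕ):ℝ) := by positivity
  have hc : z / (2*((M+1:ℕ):ℝ)) < 0 := div_neg_of_neg_of_pos hz (by positivity)
  set Kb : ℝ :=
    (volume (Metric.ball (0 : EuclideanSpace ℝ (Fin (M + 1) ⊕ Fin (M + 1))) 1)).toReal with hKbdef
  have hKb : 0 < Kb :=
    ENNReal.toReal_pos (Metric.measure_ball_pos _ _ one_pos).ne' measure_ball_lt_top.ne
  set C : ℝ := (Real.pi ^ (M+1))⁻¹ * (((2*(M+1):ℕ):ℝ) * Kb) with hCdef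
  have hC : 0 < C := by
    apply mul_pos (inv_pos.2 (pow_pos Real.pi_pos _))
    exact mul_pos (by exact_mod_cast Nat.succ_pos (2*M+1)) hKb
  have hZred : ∀ w : ℝ, Zvec (M+1) w
      = C * ∫ y in Set.Ioi (0:ℝ),
          y^(2*M+1) * Real.exp (-(y^2) + w/(2*((M+1:ℕ):ℝ))*(y^2)^2) := by
    intro w
    have h := sd_reduce M (fun s => Real.exp (-s + w/(2*((M+1:ℕ):ℝ))*s^2))
    simp only [Zvec]
    simp only [h, hCdef, hKbdef]
    ring
  have hGred : (Real.pi ^ (M+1) : ℝ)⁻¹ *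
      (∫ φ : Fin (M+1) → ℂ, ((∑ p, ‖φ p‖^2) / ((M+1:ℕ):ℝ)) *
        Real.exp (-(∑ p, ‖φ p‖^2)
          + z/(2*((M+1:ℕ):ℝ))*(∑ p, ‖φ p‖^2)^2))
      = C * ((1/((M+1:ℕ):ℝ)) * ∫ y in Set.Ioi (0:ℝ),
          y^(2*M+3) * Real.exp (-(y^2) + z/(2*((M+1:ℕ):ℝ))*(y^2)^2)) := by
    have h := sd_reduce M
      (fun s => s / ((M+1:ℕ):ℝ) * Real.exp (-s + z/(2*((M+1:ℕ):ℝ))*s^2))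
    simp only [h]
    have h2 : (∫ y in Set.Ioi (0:ℝ), y^(2*M+1) *
          ((y^2) / ((M+1:ℕ):ℝ) * Real.exp (-(y^2) + z/(2*((M+1:ℕ):ℝ))*(y^2)^2)))
        = (1/((M+1:ℕ):ℝ)) * ∫ y in Set.Ioi (0:ℝ),
          y^(2*M+3) * Real.exp (-(y^2) + z/(2*((M+1:ℕ):ℝ))*(y^2)^2) := by
      rw [← integral_const_mul]
      exact integral_congr_ae (Filter.Eventually.of_forall fun y => by ring)
    rw [h2, hCdef, hKbdef]
    ring
  have hbound : ∀ᵐ y ∂(volume.restrict (Set.Ioi (0:ℝ))), ∀ w ∈ Metric.ball z (-z/2),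
      ‖(1/(2*((M+1:ℕ):ℝ))) * (y^(2*M+5) * Real.exp (-(y^2) + w/(2*((M+1:ℕ):ℝ))*(y^2)^2))‖
        ≤ (1/(2*((M+1:ℕ):ℝ))) *
            (y^(2*M+5) * Real.exp (-(y^2) + (z/2)/(2*((M+1:ℕ):ℝ))*(y^2)^2)) := by
    filter_upwards [ae_restrict_mem measurableSet_Ioi] with y hy
    intro w hw
    have hy0 : (0:ℝ) < y := hy
    rw [Metric.mem_ball, Real.dist_eq] at hw
    have hwz : w ≤ z/2 := by
      rcases abs_lt.1 hw with ⟨h1, h2⟩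
      linarith
    have h2N : (0:ℝ) < 2*((M+1:ℕ):ℝ) := by positivity
    rw [Real.norm_eq_abs, abs_mul, abs_mul, abs_pow, abs_of_pos hy0, Real.abs_exp,
      abs_of_pos (by positivity : (0:ℝ) < 1/(2*((M+1:ℕ):ℝ)))]
    refine mul_le_mul_of_nonneg_left
      (mul_le_mul_of_nonneg_left ?_ (pow_nonneg hy0.le _)) (by positivity)
    refine Real.exp_le_exp.2 (add_le_add_right ?_ _)
    exact mul_le_mul_of_nonneg_right ((div_le_div_iff_of_pos_right h2N).2 hwz) (by positivity)
  have hboundint : Integrable (fun y : ℝ => (1/(2*((M+1:ℕ):ℝ))) *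
      (y^(2*M+5) * Real.exp (-(y^2) + (z/2)/(2*((M+1:ℕ):ℝ))*(y^2)^2)))
      (volume.restrict (Set.Ioi (0:ℝ))) := by
    have hc2 : (z/2) / (2*((M+1:ℕ):ℝ)) ≤ 0 :=
      (div_neg_of_neg_of_pos (by linarith) (by positivity)).le
    exact (sd_integrable (2*M+5) hc2).const_mul _
  have hdiff : ∀ᵐ y ∂(volume.restrict (Set.Ioi (0:ℝ))), ∀ w ∈ Metric.ball z (-z/2),
      HasDerivAt (fun w => y^(2*M+1) * Real.exp (-(y^2) + w/(2*((M+1:ℕ):ℝ))*(y^2)^2))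
        ((1/(2*((M+1:ℕ):ℝ))) *
          (y^(2*M+5) * Real.exp (-(y^2) + w/(2*((M+1:ℕ):ℝ))*(y^2)^2))) w := by
    refine Filter.Eventually.of_forall fun y => fun w _ => ?_
    have h0 := (((hasDerivAt_id w).div_const (2*((M+1:ℕ):ℝ))).mul_const ((y^2)^2)).const_add
      (-(y^2))
    simp only [id_eq] at h0
    refine (h0.exp.const_mul (y^(2*M+1))).congr_deriv ?_
    ring
  have hder := hasDerivAt_integral_of_dominated_loc_of_deriv_le
    (F := fun w => fun y : ℝ => y^(2*M+1) * Real.exp (-(y^2) + w/(2*((M+1:ℕ):ℝ))*(y^2)^2))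
    (F' := fun w => fun y : ℝ => (1/(2*((M+1:ℕ):ℝ))) *
      (y^(2*M+5) * Real.exp (-(y^2) + w/(2*((M+1:ℕ):ℝ))*(y^2)^2)))
    (μ := volume.restrict (Set.Ioi 0)) (x₀ := z)
    (bound := fun y : ℝ => (1/(2*((M+1:ℕ):ℝ))) *
      (y^(2*M+5) * Real.exp (-(y^2) + (z/2)/(2*((M+1:ℕ):ℝ))*(y^2)^2)))
    (s := Metric.ball z (-z/2)) (Metric.ball_mem_nhds z (by linarith))
    (Filter.Eventually.of_forall fun w => Continuous.aestronglyMeasurable (by fun_prop))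
    (sd_integrable (2*M+1) hc.le)
    (Continuous.aestronglyMeasurable (by fun_prop))
    hbound hboundint hdiff
  obtain ⟨-, hderiv⟩ := hder
  rw [integral_const_mul] at hderiv
  have hZderiv : HasDerivAt (fun w => Zvec (M+1) w)
      (C * ((1/(2*((M+1:ℕ):ℝ))) * ∫ y in Set.Ioi (0:ℝ),
        y^(2*M+5) * Real.exp (-(y^2) + z/(2*((M+1:ℕ):ℝ))*(y^2)^2))) z := by
    rw [funext hZred]
    exact hderiv.const_mul C
  have hZpos : 0 < Zvec (M+1) z := by
    rw [hZred z]
    exact mul_pos hC (sd_pos _ hc.le)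
  have hlog := hZderiv.log hZpos.ne'
  refine ⟨hlog.differentiableAt, ?_⟩
  have hd : HasDerivAt (fun y => (1 / ((M+1:ℕ):ℝ)) * Real.log (Zvec (M+1) y))
      ((1/((M+1:ℕ):ℝ)) * ((C * ((1/(2*((M+1:ℕ):ℝ))) * ∫ y in Set.Ioi (0:ℝ),
        y^(2*M+5) * Real.exp (-(y^2) + z/(2*((M+1:ℕ):ℝ))*(y^2)^2))) / Zvec (M+1) z)) z :=
    hlog.const_mul _
  rw [hd.deriv]
  simp only [G2vec]
  rw [hGred, hZred z]
  have hIBP := sd_ibp M z hz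
  set I1 := ∫ y in Set.Ioi (0:ℝ),
    y^(2*M+1) * Real.exp (-(y^2) + z/(2*((M+1:ℕ):ℝ))*(y^2)^2) with hI1def
  set I3 := ∫ y in Set.Ioi (0:ℝ),
    y^(2*M+3) * Real.exp (-(y^2) + z/(2*((M+1:ℕ):ℝ))*(y^2)^2) with hI3def
  set I5 := ∫ y in Set.Ioi (0:ℝ),
    y^(2*M+5) * Real.exp (-(y^2) + z/(2*((M+1:ℕ):ℝ))*(y^2)^2) with hI5def
  have hI1pos : 0 < I1 := sd_pos _ hc.le
  have hC0 : C ≠ 0 := hC.ne'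
  have hI10 : I1 ≠ 0 := hI1pos.ne'
  have hN0 : ((M+1:ℕ):ℝ) ≠ 0 := hNr.ne'
  have hM0 : ((M:ℝ)+1) ≠ 0 := by positivity
  have hIBP' : I3 = ((M:ℝ)+1)*I1 + (z/((M:ℝ)+1))*I5 := by
    push_cast at hIBP
    field_simp
    linear_combination hIBP/2
  push_cast
  rw [hIBP']
  field_simp
end

section
/- For N ≥ 1 an integer and z < 0 real, define Z(z,N) = ∫_{ℂ^N} e^{−‖φ‖² + (z/(2N))‖φ‖⁴} ∏_{p=1}^N (dRe φ_p dIm φ_p / π), where ‖φ‖² = Σ_{p=1}^N |φ_p|². Then for every real z < 0, setting s = (1 − √(1 − 4z))/2, one has lim_{N→∞} (1/N) log Z(z,N) = −s²/(2z) − log(1 − s). -/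
open MeasureTheory

open MeasureTheory.Measure Set Filter Real Topology

noncomputable def cplxEquiv (N : ℕ) : (EuclideanSpace ℝ (Fin N ⊕ Fin N)) ≃ᵐ (Fin N → ℂ) :=
  (MeasurableEquiv.toLp 2 ((Fin N ⊕ Fin N) → ℝ)).symm.trans
    ((MeasurableEquiv.sumPiEquivProdPi (fun _ : Fin N ⊕ Fin N => ℝ)).trans
      (((MeasurableEquiv.arrowProdEquivProdArrow ℝ ℝ (Fin N)).symm).trans
        (MeasurableEquiv.piCongrRight (fun _ : Fin N => Complex.measurableEquivRealProd.symm))))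

lemma cplxEquiv_mp (N : ℕ) : MeasurePreserving (cplxEquiv N) volume volume := by
  refine ((EuclideanSpace.volume_preserving_symm_measurableEquiv_toLp (Fin N ⊕ Fin N)).trans
    ((volume_measurePreserving_sumPiEquivProdPi (fun _ : Fin N ⊕ Fin N => ℝ)).trans
      (((volume_measurePreserving_arrowProdEquivProdArrow ℝ ℝ (Fin N)).symm
        (MeasurableEquiv.arrowProdEquivProdArrow ℝ ℝ (Fin N))).trans
        (volume_preserving_pi (fun _ : Fin N => Complex.volume_preserving_equiv_real_prod.symm
          Complex.measurableEquivRealProd)))))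

lemma cplxEquiv_apply (N : ℕ) (x : EuclideanSpace ℝ (Fin N ⊕ Fin N)) (p : Fin N) :
    cplxEquiv N x p = Complex.mk (x (Sum.inl p)) (x (Sum.inr p)) := rfl

lemma sum_sq_abs_cplxEquiv (N : ℕ) (x : EuclideanSpace ℝ (Fin N ⊕ Fin N)) :
    ∑ p, ‖cplxEquiv N x p‖ ^ 2 = ‖x‖ ^ 2 := by
  have h : ‖x‖ = Real.sqrt (∑ i, ‖x i‖ ^ 2) := EuclideanSpace.norm_eq x
  rw [h, Real.sq_sqrt (Finset.sum_nonneg fun i _ => sq_nonneg _)]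
  simp only [Real.norm_eq_abs, sq_abs]
  rw [Fintype.sum_sum_type]
  rw [← Finset.sum_add_distrib]
  congr 1
  ext p
  rw [cplxEquiv_apply, Complex.sq_norm, Complex.normSq_mk]
  ring

lemma integral_comp_normSq (N : ℕ) (hN : 1 ≤ N) (F : ℝ → ℝ) :
    ∫ φ : Fin N → ℂ, F (∑ p, ‖φ p‖ ^ 2) =
      (2*N : ℝ) * (π ^ N / N.factorial) * ∫ y in Ioi (0:ℝ), y ^ (2*N-1) * F (y^2) := by
  haveI : Nonempty (Fin N) := ⟨⟨0, hN⟩⟩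
  haveI : Nontrivial (EuclideanSpace ℝ (Fin N ⊕ Fin N)) := inferInstance
  rw [← (cplxEquiv_mp N).integral_comp (cplxEquiv N).measurableEmbedding
      (fun φ => F (∑ p, ‖φ p‖ ^ 2))]
  have h1 : ∀ x : EuclideanSpace ℝ (Fin N ⊕ Fin N),
      F (∑ p, ‖cplxEquiv N x p‖ ^ 2) = (fun r => F (r ^ 2)) ‖x‖ := by
    intro x; rw [sum_sq_abs_cplxEquiv]
  simp_rw [h1]
  rw [MeasureTheory.integral_fun_norm_addHaar (volume) (fun r => F (r ^ 2))]
  have hdim : Module.finrank ℝ (EuclideanSpace ℝ (Fin N ⊕ Fin N)) = 2 * N := by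
    simp [finrank_euclideanSpace, Fintype.card_sum, two_mul]
  rw [hdim]
  have hball : (volume (Metric.ball (0 : EuclideanSpace ℝ (Fin N ⊕ Fin N)) 1)).toReal
      = π ^ N / N.factorial := by
    rw [EuclideanSpace.volume_ball]
    have hcard : Fintype.card (Fin N ⊕ Fin N) = 2 * N := by
      simp [Fintype.card_sum, two_mul]
    rw [hcard]
    have h2 : (Real.sqrt π) ^ (2 * N) = π ^ N := by
      rw [pow_mul, Real.sq_sqrt Real.pi_nonneg]
    have h3 : ((2 * N : ℕ) : ℝ) / 2 + 1 = (N : ℝ) + 1 := by push_cast; ring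
    rw [h2, h3]
    have h4 : Real.Gamma ((N : ℝ) + 1) = N.factorial := Real.Gamma_nat_eq_factorial N
    rw [h4]
    simp [ENNReal.toReal_ofReal (by positivity : (0:ℝ) ≤ π ^ N / N.factorial)]
  rw [measureReal_def, hball]
  simp only [nsmul_eq_mul, smul_eq_mul]
  push_cast
  ring

lemma radial_to_gamma (N : ℕ) (hN : 1 ≤ N) (F : ℝ → ℝ) :
    ∫ y in Ioi (0:ℝ), y ^ (2*N-1) * F (y^2) = (1/2) * ∫ t in Ioi (0:ℝ), t^(N-1) * F t := by
  have key := integral_comp_rpow_Ioi (fun t => t^(N-1) * F t) (p := 2) two_ne_zero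
  have congr1 : ∫ x in Ioi (0:ℝ), (|(2:ℝ)| * x ^ ((2:ℝ) - 1)) • ((x ^ (2:ℝ))^(N-1) * F (x ^ (2:ℝ)))
      = ∫ x in Ioi (0:ℝ), 2 * (x ^ (2*N-1) * F (x^2)) := by
    refine setIntegral_congr_fun measurableSet_Ioi (fun x hx => ?_)
    have hx0 : (0:ℝ) ≤ x := (le_of_lt hx)
    have h2 : x ^ (2:ℝ) = x^2 := by
      rw [show (2:ℝ) = ((2:ℕ):ℝ) by norm_num, Real.rpow_natCast]
    have h1 : x ^ ((2:ℝ) - 1) = x := by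
      norm_num
    rw [h2, h1, smul_eq_mul]
    have hpow : x * (x^2)^(N-1) = x^(2*N-1) := by
      rw [← pow_mul, ← pow_succ']
      congr 1
      omega
    rw [abs_of_nonneg (by norm_num : (0:ℝ) ≤ 2)]
    calc 2 * x * ((x^2)^(N-1) * F (x^2)) = 2 * ((x * (x^2)^(N-1)) * F (x^2)) := by ring
      _ = 2 * (x ^ (2*N-1) * F (x^2)) := by rw [hpow]
  rw [congr1, MeasureTheory.integral_const_mul] at key
  linarith [key]

lemma Zvec_eq (N : ℕ) (hN : 1 ≤ N) (z : ℝ) :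
    Zvec N z = (1 / (N-1).factorial : ℝ) *
      ∫ t in Ioi (0:ℝ), t^(N-1) * Real.exp (-t + z/(2*N) * t^2) := by
  unfold Zvec
  rw [integral_comp_normSq N hN (fun t => Real.exp (-t + z/(2*N) * t^2)),
    radial_to_gamma N hN (fun t => Real.exp (-t + z/(2*N) * t^2))]
  have hfac : (N.factorial : ℝ) = N * (N-1).factorial := by
    rw [← Nat.mul_factorial_pred (by omega : N ≠ 0)]
    push_cast
    ring
  have hπ : (π : ℝ) ^ N ≠ 0 := by positivity
  have hN' : (N:ℝ) ≠ 0 := Nat.cast_ne_zero.mpr (by omega)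
  have hfN : ((N-1).factorial : ℝ) ≠ 0 := Nat.cast_ne_zero.mpr (Nat.factorial_ne_zero _)
  rw [hfac]
  generalize (∫ t in Ioi (0:ℝ), t^(N-1) * Real.exp (-t + z/(2*N) * t^2)) = I
  field_simp

/-! ### Laplace method -/

noncomputable def hfun (c u : ℝ) : ℝ := Real.log u - u + c*u^2/2

noncomputable def Ilap (c : ℝ) (N : ℕ) : ℝ :=
  ∫ u in Ioi (0:ℝ), u^(N-1) * Real.exp (N * (-u + c*u^2/2))

lemma hfun_le {c u0 : ℝ} (hc : c ≤ 0) (hu0 : 0 < u0) (hroot : c * u0^2 - u0 + 1 = 0)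
    {u : ℝ} (hu : 0 < u) : hfun c u ≤ hfun c u0 := by
  have hlog : Real.log u - Real.log u0 ≤ u/u0 - 1 := by
    rw [← Real.log_div hu.ne' hu0.ne']
    exact Real.log_le_sub_one_of_pos (div_pos hu hu0)
  have hdiv : u/u0 - 1 = (u - u0) * (1/u0) := by field_simp
  have h1 : 1/u0 = 1 - c*u0 := by
    field_simp
    nlinarith [hroot]
  rw [hdiv, h1] at hlog
  unfold hfun
  nlinarith [mul_nonneg (neg_nonneg.2 hc) (sq_nonneg (u - u0))]

lemma hfun_ge {c u0 δ u : ℝ} (hc : c ≤ 0) (hu0 : 0 < u0) (hδ : 0 < δ) (hδ1 : δ ≤ 1)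
    (hu : u0 ≤ u) (hu' : u ≤ u0 + δ) :
    hfun c u0 - (1 - c*(2*u0+1)/2) * δ ≤ hfun c u := by
  have hlog : Real.log u0 ≤ Real.log u := Real.log_le_log hu0 hu
  have h1 : 0 ≤ δ - (u - u0) := by linarith
  have h2 : 0 ≤ (2*u0+1) - (u+u0) := by linarith
  have h3 : 0 ≤ -c := by linarith
  unfold hfun
  nlinarith [mul_nonneg h3 (mul_nonneg (sub_nonneg.2 hu) h2),
    mul_nonneg h3 (mul_nonneg h1 (by linarith : (0:ℝ) ≤ u + u0)),
    mul_nonneg h3 (mul_nonneg h1 h2)]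

lemma integrand_eq {c u : ℝ} (hu : 0 < u) (N : ℕ) (hN : 1 ≤ N) :
    u^(N-1) * Real.exp (N * (-u + c*u^2/2))
      = Real.exp (((N:ℝ)-1) * hfun c u) * Real.exp (-u + c*u^2/2) := by
  have hpow : u^(N-1) = Real.exp (((N:ℝ)-1) * Real.log u) := by
    rw [← Real.rpow_natCast u (N-1), Real.rpow_def_of_pos hu]
    congr 1
    rw [Nat.cast_sub hN]
    push_cast; ring
  rw [hpow, ← Real.exp_add, ← Real.exp_add]
  congr 1
  unfold hfun
  have : ((N:ℝ) - 1) + 1 = N := by ring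
  ring

lemma pointwise_le {c u0 : ℝ} (hc : c ≤ 0) (hu0 : 0 < u0) (hroot : c * u0^2 - u0 + 1 = 0)
    {N : ℕ} (hN : 1 ≤ N) {u : ℝ} (hu : 0 < u) :
    u^(N-1) * Real.exp (N * (-u + c*u^2/2))
      ≤ Real.exp (((N:ℝ)-1) * hfun c u0) * Real.exp (-u) := by
  rw [integrand_eq hu N hN]
  have hN1 : (0:ℝ) ≤ (N:ℝ) - 1 := by
    have : (1:ℝ) ≤ N := by exact_mod_cast hN
    linarith
  have h1 : Real.exp (((N:ℝ)-1) * hfun c u) ≤ Real.exp (((N:ℝ)-1) * hfun c u0) :=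
    Real.exp_le_exp.mpr (mul_le_mul_of_nonneg_left (hfun_le hc hu0 hroot hu) hN1)
  have h2 : Real.exp (-u + c*u^2/2) ≤ Real.exp (-u) :=
    Real.exp_le_exp.mpr (by nlinarith [mul_nonneg (neg_nonneg.2 hc) (sq_nonneg u)])
  exact mul_le_mul h1 h2 (Real.exp_pos _).le (Real.exp_pos _).le

lemma integrableOn_lap {c : ℝ} (hc : c ≤ 0) {u0 : ℝ} (hu0 : 0 < u0)
    (hroot : c * u0^2 - u0 + 1 = 0) {N : ℕ} (hN : 1 ≤ N) :
    IntegrableOn (fun u => u^(N-1) * Real.exp (N * (-u + c*u^2/2))) (Ioi (0:ℝ)) := by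
  have hg0 : IntegrableOn (fun u : ℝ => Real.exp (-u)) (Ioi (0:ℝ)) := by
    have := exp_neg_integrableOn_Ioi (0:ℝ) (one_pos)
    simpa using this
  have hg : IntegrableOn (fun u : ℝ => Real.exp (((N:ℝ)-1) * hfun c u0) * Real.exp (-u))
      (Ioi (0:ℝ)) := hg0.const_mul _
  refine Integrable.mono' hg ?_ ?_
  · exact (Continuous.aestronglyMeasurable (by continuity)).restrict
  · filter_upwards [ae_restrict_mem measurableSet_Ioi] with u hu
    rw [mem_Ioi] at hu
    rw [Real.norm_eq_abs, abs_of_nonneg (mul_nonneg (pow_nonneg hu.le _) (Real.exp_pos _).le)]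
    exact pointwise_le hc hu0 hroot hN hu

lemma Ilap_le {c u0 : ℝ} (hc : c ≤ 0) (hu0 : 0 < u0) (hroot : c * u0^2 - u0 + 1 = 0)
    {N : ℕ} (hN : 1 ≤ N) : Ilap c N ≤ Real.exp (((N:ℝ)-1) * hfun c u0) := by
  have hg0 : IntegrableOn (fun u : ℝ => Real.exp (-u)) (Ioi (0:ℝ)) := by
    have := exp_neg_integrableOn_Ioi (0:ℝ) (one_pos)
    simpa using this
  have hg : IntegrableOn (fun u : ℝ => Real.exp (((N:ℝ)-1) * hfun c u0) * Real.exp (-u))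
      (Ioi (0:ℝ)) := hg0.const_mul _
  have hmono : Ilap c N ≤ ∫ u in Ioi (0:ℝ), Real.exp (((N:ℝ)-1) * hfun c u0) * Real.exp (-u) := by
    refine setIntegral_mono_on (integrableOn_lap hc hu0 hroot hN) hg measurableSet_Ioi ?_
    intro u hu
    exact pointwise_le hc hu0 hroot hN hu
  calc Ilap c N ≤ _ := hmono
    _ = Real.exp (((N:ℝ)-1) * hfun c u0) * ∫ u in Ioi (0:ℝ), Real.exp (-u) := by
        rw [MeasureTheory.integral_const_mul]
    _ = Real.exp (((N:ℝ)-1) * hfun c u0) := by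
        rw [integral_exp_neg_Ioi_zero, mul_one]

lemma integrand_eq' {c u : ℝ} (hu : 0 < u) (N : ℕ) (hN : 1 ≤ N) :
    u^(N-1) * Real.exp (N * (-u + c*u^2/2)) = Real.exp (N * hfun c u) * u⁻¹ := by
  have hexp : Real.exp ((N:ℝ) * Real.log u) = u^N := by
    rw [Real.exp_nat_mul, Real.exp_log hu]
  have : (N:ℝ) * hfun c u = (N:ℝ) * Real.log u + (N:ℝ) * (-u + c*u^2/2) := by
    unfold hfun; ring
  rw [this, Real.exp_add, hexp]
  rw [pow_sub₀ u hu.ne' hN, pow_one]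
  field_simp

lemma Ilap_ge {c u0 : ℝ} (hc : c ≤ 0) (hu0 : 0 < u0) (hroot : c * u0^2 - u0 + 1 = 0)
    {N : ℕ} (hN : 1 ≤ N) {δ : ℝ} (hδ : 0 < δ) (hδ1 : δ ≤ 1) :
    δ * ((u0+1)⁻¹ * Real.exp (N * (hfun c u0 - (1 - c*(2*u0+1)/2) * δ))) ≤ Ilap c N := by
  set m : ℝ := (u0+1)⁻¹ * Real.exp (N * (hfun c u0 - (1 - c*(2*u0+1)/2) * δ)) with hm
  have hIoc : Ioc u0 (u0+δ) ⊆ Ioi (0:ℝ) := fun x hx => lt_trans hu0 hx.1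
  have hfull := integrableOn_lap hc hu0 hroot hN (c := c)
  have hint : IntegrableOn (fun u => u^(N-1) * Real.exp (N * (-u + c*u^2/2))) (Ioc u0 (u0+δ)) :=
    hfull.mono_set hIoc
  have hstep1 : ∫ _u in Ioc u0 (u0+δ), m ≤ ∫ u in Ioc u0 (u0+δ),
      u^(N-1) * Real.exp (N * (-u + c*u^2/2)) := by
    refine setIntegral_mono_on (integrableOn_const measure_Ioc_lt_top.ne) hint
      measurableSet_Ioc ?_
    intro u hu
    have hu0u : 0 < u := lt_trans hu0 hu.1
    rw [integrand_eq' hu0u N hN, hm]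
    have e1 : Real.exp ((N:ℝ) * (hfun c u0 - (1 - c*(2*u0+1)/2) * δ)) ≤ Real.exp ((N:ℝ) * hfun c u) := by
      apply Real.exp_le_exp.mpr
      apply mul_le_mul_of_nonneg_left _ (Nat.cast_nonneg N)
      exact hfun_ge hc hu0 hδ hδ1 hu.1.le hu.2
    have e2 : (u0+1)⁻¹ ≤ u⁻¹ := by
      apply inv_anti₀ hu0u
      linarith [hu.2]
    calc (u0+1)⁻¹ * Real.exp ((N:ℝ) * (hfun c u0 - (1 - c*(2*u0+1)/2) * δ))
        ≤ u⁻¹ * Real.exp ((N:ℝ) * hfun c u) :=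
          mul_le_mul e2 e1 (Real.exp_pos _).le (by positivity)
      _ = Real.exp ((N:ℝ) * hfun c u) * u⁻¹ := by ring
  have hconst : ∫ _u in Ioc u0 (u0+δ), m = δ * m := by
    rw [setIntegral_const, measureReal_def, Real.volume_Ioc]
    rw [smul_eq_mul]
    congr 1
    rw [show u0 + δ - u0 = δ by ring, ENNReal.toReal_ofReal hδ.le]
  have hstep2 : ∫ u in Ioc u0 (u0+δ), u^(N-1) * Real.exp (N * (-u + c*u^2/2)) ≤ Ilap c N := by
    refine setIntegral_mono_set hfull ?_ (HasSubset.Subset.eventuallyLE hIoc)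
    filter_upwards [ae_restrict_mem measurableSet_Ioi] with u hu
    rw [mem_Ioi] at hu
    positivity
  rw [hconst] at hstep1
  exact le_trans hstep1 hstep2

lemma Ilap_pos {c u0 : ℝ} (hc : c ≤ 0) (hu0 : 0 < u0) (hroot : c * u0^2 - u0 + 1 = 0)
    {N : ℕ} (hN : 1 ≤ N) : 0 < Ilap c N := by
  have := Ilap_ge hc hu0 hroot hN (δ := 1) one_pos le_rfl
  have hpos : (0:ℝ) < 1 * ((u0+1)⁻¹ * Real.exp (N * (hfun c u0 - (1 - c*(2*u0+1)/2) * 1))) := by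
    positivity
  linarith

lemma laplace_tendsto {c u0 : ℝ} (hc : c ≤ 0) (hu0 : 0 < u0)
    (hroot : c * u0^2 - u0 + 1 = 0) :
    Tendsto (fun N : ℕ => (1/(N:ℝ)) * Real.log (Ilap c N)) atTop (𝓝 (hfun c u0)) := by
  set M := hfun c u0 with hM
  set K := 1 - c*(2*u0+1)/2 with hK
  have hK1 : 1 ≤ K := by
    rw [hK]
    nlinarith [mul_nonneg (neg_nonneg.2 hc) (by linarith : (0:ℝ) ≤ 2*u0+1)]
  have hKpos : 0 < K := lt_of_lt_of_le one_pos hK1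
  rw [Metric.tendsto_atTop]
  intro ε hε
  set δ := min 1 (ε/(2*K)) with hδdef
  have hδpos : 0 < δ := lt_min one_pos (by positivity)
  have hδ1 : δ ≤ 1 := min_le_left _ _
  have hKδ : K * δ ≤ ε/2 := by
    have h1 : δ ≤ ε/(2*K) := min_le_right _ _
    have := mul_le_mul_of_nonneg_left h1 hKpos.le
    calc K * δ ≤ K * (ε/(2*K)) := this
      _ = ε/2 := by field_simp
  set C0 := Real.log (δ * (u0+1)⁻¹) with hC0
  obtain ⟨N1, hN1⟩ := exists_nat_gt ((|C0| + |M|)/(ε/2))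
  refine ⟨max 1 N1, fun n hn => ?_⟩
  have hn1 : 1 ≤ n := le_trans (le_max_left _ _) hn
  have hnN1 : N1 ≤ n := le_trans (le_max_right _ _) hn
  have npos : (0:ℝ) < n := by exact_mod_cast hn1
  have hn' : (|C0| + |M|)/(ε/2) < (n:ℝ) :=
    lt_of_lt_of_le hN1 (by exact_mod_cast hnN1)
  have hsum : |C0| + |M| < (n:ℝ) * (ε/2) := by
    rw [div_lt_iff₀ (half_pos hε)] at hn'
    linarith
  have hC0n : |C0|/(n:ℝ) < ε/2 := by
    rw [div_lt_iff₀ npos]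
    nlinarith [abs_nonneg M]
  have hMn : |M|/(n:ℝ) < ε/2 := by
    rw [div_lt_iff₀ npos]
    nlinarith [abs_nonneg C0]
  have hpos := Ilap_pos hc hu0 hroot hn1 (c := c)
  -- upper bound
  have hub := Ilap_le hc hu0 hroot hn1 (c := c)
  have hlogub : Real.log (Ilap c n) ≤ ((n:ℝ)-1)*M := by
    calc Real.log (Ilap c n) ≤ Real.log (Real.exp (((n:ℝ)-1)*M)) :=
          Real.log_le_log hpos hub
      _ = ((n:ℝ)-1)*M := Real.log_exp _
  have hxub : (1/(n:ℝ)) * Real.log (Ilap c n) - M ≤ |M|/n := by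
    have h1 : (1/(n:ℝ)) * Real.log (Ilap c n) ≤ (1/(n:ℝ)) * (((n:ℝ)-1)*M) :=
      mul_le_mul_of_nonneg_left hlogub (by positivity)
    have h2 : (1/(n:ℝ)) * (((n:ℝ)-1)*M) - M = (-M)/n := by
      field_simp
      ring
    have h3 : (-M)/(n:ℝ) ≤ |M|/n := by
      gcongr
      exact neg_le_abs M
    linarith
  -- lower bound
  have hlb := Ilap_ge hc hu0 hroot hn1 hδpos hδ1 (c := c)
  have hlbpos : (0:ℝ) < δ * ((u0+1)⁻¹ * Real.exp (n * (M - K * δ))) := by positivity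
  have hloglb : C0 + (n:ℝ)*(M - K*δ) ≤ Real.log (Ilap c n) := by
    have h1 : Real.log (δ * ((u0+1)⁻¹ * Real.exp (n * (M - K * δ)))) ≤ Real.log (Ilap c n) :=
      Real.log_le_log hlbpos hlb
    have h2 : Real.log (δ * ((u0+1)⁻¹ * Real.exp (n * (M - K * δ))))
        = C0 + (n:ℝ)*(M - K*δ) := by
      rw [show δ * ((u0+1)⁻¹ * Real.exp (n * (M - K * δ)))
          = (δ * (u0+1)⁻¹) * Real.exp (n * (M - K * δ)) by ring]
      rw [Real.log_mul (by positivity) (Real.exp_ne_zero _), Real.log_exp, hC0]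
    rw [h2] at h1
    exact h1
  have hxlb : M - (1/(n:ℝ)) * Real.log (Ilap c n) ≤ K*δ + |C0|/n := by
    have h1 : (1/(n:ℝ)) * (C0 + (n:ℝ)*(M - K*δ)) ≤ (1/(n:ℝ)) * Real.log (Ilap c n) :=
      mul_le_mul_of_nonneg_left hloglb (by positivity)
    have h2 : (1/(n:ℝ)) * (C0 + (n:ℝ)*(M - K*δ)) = C0/n + M - K*δ := by
      field_simp
      ring
    have h3 : -(C0/(n:ℝ)) ≤ |C0|/n := by
      rw [← neg_div]
      gcongr
      exact neg_le_abs C0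
    rw [h2] at h1
    linarith
  rw [Real.dist_eq, abs_sub_lt_iff]
  constructor
  · linarith
  · linarith

lemma gamma_to_lap (c : ℝ) (N : ℕ) (hN : 1 ≤ N) :
    ∫ t in Ioi (0:ℝ), t^(N-1) * Real.exp (-t + c/(2*(N:ℝ)) * t^2)
      = (N:ℝ)^N * Ilap c N := by
  have hNpos : (0:ℝ) < N := by exact_mod_cast hN
  have hNe : (N:ℝ) ≠ 0 := hNpos.ne'
  have key := integral_comp_mul_left_Ioi
    (fun t => t^(N-1) * Real.exp (-t + c/(2*(N:ℝ)) * t^2)) 0 hNpos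
  rw [mul_zero] at key
  have lhs_eq : (∫ u in Ioi (0:ℝ),
      ((N:ℝ)*u)^(N-1) * Real.exp (-((N:ℝ)*u) + c/(2*(N:ℝ)) * ((N:ℝ)*u)^2))
      = (N:ℝ)^(N-1) * Ilap c N := by
    rw [Ilap, ← MeasureTheory.integral_const_mul]
    refine setIntegral_congr_fun measurableSet_Ioi (fun u hu => ?_)
    have hexp : -((N:ℝ)*u) + c/(2*(N:ℝ))*((N:ℝ)*u)^2 = (N:ℝ) * (-u + c*u^2/2) := by
      field_simp
    rw [mul_pow, hexp]
    ring
  rw [lhs_eq, smul_eq_mul] at key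
  have hpow : (N:ℝ)^N = (N:ℝ) * (N:ℝ)^(N-1) := by
    rw [← pow_succ']
    congr 1
    omega
  rw [hpow]
  have key2 := congrArg (fun x => (N:ℝ) * x) key
  simp only [← mul_assoc, mul_inv_cancel₀ hNe, one_mul] at key2
  rw [← key2]

lemma fact_eq (N : ℕ) (hN : 1 ≤ N) :
    (((N-1).factorial : ℕ) : ℝ) = (N:ℝ)^N * Ilap 0 N := by
  have hNpos : (0:ℝ) < N := by exact_mod_cast hN
  have h1 : Real.Gamma (N:ℝ) = ∫ x in Ioi (0:ℝ), Real.exp (-x) * x^((N:ℝ)-1) :=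
    Real.Gamma_eq_integral hNpos
  have h2 : Real.Gamma (N:ℝ) = ((N-1).factorial : ℝ) := by
    have h := Real.Gamma_nat_eq_factorial (N-1)
    rw [show ((N-1 : ℕ) + 1 : ℝ) = (N:ℝ) by rw [Nat.cast_sub hN]; push_cast; ring] at h
    exact h
  have h3 : (∫ x in Ioi (0:ℝ), Real.exp (-x) * x^((N:ℝ)-1))
      = ∫ t in Ioi (0:ℝ), t^(N-1) * Real.exp (-t + 0/(2*(N:ℝ)) * t^2) := by
    refine setIntegral_congr_fun measurableSet_Ioi (fun x hx => ?_)
    have hx' : x^((N:ℝ)-1) = x^(N-1 : ℕ) := by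
      rw [show ((N:ℝ)-1) = ((N-1 : ℕ) : ℝ) by rw [Nat.cast_sub hN]; push_cast; ring,
        Real.rpow_natCast]
    rw [hx']
    norm_num [mul_comm]
  rw [← gamma_to_lap 0 N hN, ← h3, ← h1, h2]

lemma Zvec_ratio (N : ℕ) (hN : 1 ≤ N) (z : ℝ) :
    Zvec N z = Ilap z N / Ilap 0 N := by
  rw [Zvec_eq N hN z, gamma_to_lap z N hN]
  have h0 : (((N-1).factorial : ℕ) : ℝ) = (N:ℝ)^N * Ilap 0 N := fact_eq N hN
  rw [h0]
  have hNpos : (0:ℝ) < N := by exact_mod_cast hN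
  have hI0 : Ilap 0 N ≠ 0 := (Ilap_pos le_rfl one_pos (by norm_num) hN).ne'
  have hNN : (N:ℝ)^N ≠ 0 := by positivity
  field_simp

/-- **Large-`N` limit of the free energy of the quartic vector model.**
For every real `z < 0`, setting `s = (1 - √(1-4z))/2`,
`lim_{N→∞} (1/N) log Z(z,N) = -s²/(2z) - log (1-s)`. -/
theorem free_energy_tendsto (z : ℝ) (hz : z < 0) :
    Filter.Tendsto (fun N : ℕ => (1 / N : ℝ) * Real.log (Zvec N z)) Filter.atTop
      (nhds (-((1 - Real.sqrt (1 - 4 * z)) / 2) ^ 2 / (2 * z)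
        - Real.log (1 - (1 - Real.sqrt (1 - 4 * z)) / 2))) := by
  have h4z : (0:ℝ) ≤ 1 - 4*z := by linarith
  set q := Real.sqrt (1 - 4*z) with hq
  have hq2 : q^2 = 1 - 4*z := Real.sq_sqrt h4z
  have hqnn : 0 ≤ q := Real.sqrt_nonneg _
  have hq1 : 1 < q := by nlinarith
  set s := (1 - q)/2 with hs
  have hsneg : s < 0 := by rw [hs]; linarith
  have hsz : s * (1 - s) = z := by rw [hs]; linear_combination (-(1:ℝ)/4) * hq2
  have hzne : z ≠ 0 := ne_of_lt hz
  have hsne : s ≠ 0 := ne_of_lt hsneg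
  have h1s : (0:ℝ) < 1 - s := by linarith
  have hu0 : 0 < s/z := div_pos_of_neg_of_neg hsneg hz
  have hs2 : s^2 - s + z = 0 := by linear_combination -(1:ℝ)*hsz
  have hroot : z * (s/z)^2 - s/z + 1 = 0 := by
    have e : z * (s/z)^2 - s/z + 1 = (s^2 - s + z)/z := by
      field_simp
    rw [e, hs2, zero_div]
  have T1 := laplace_tendsto hz.le hu0 hroot
  have T0 : Tendsto (fun N : ℕ => (1/(N:ℝ)) * Real.log (Ilap 0 N)) atTop (𝓝 (hfun 0 1)) :=
    laplace_tendsto le_rfl one_pos (by norm_num)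
  have T := T1.sub T0
  have heq : ∀ᶠ N : ℕ in atTop, (1/(N:ℝ)) * Real.log (Ilap z N) - (1/(N:ℝ)) * Real.log (Ilap 0 N)
      = (1 / N : ℝ) * Real.log (Zvec N z) := by
    filter_upwards [eventually_ge_atTop 1] with N hN
    rw [Zvec_ratio N hN z, Real.log_div (Ilap_pos hz.le hu0 hroot hN).ne'
      (Ilap_pos le_rfl one_pos (by norm_num) hN).ne']
    ring
  have Tz := T.congr' heq
  have hfin : hfun z (s/z) - hfun 0 1 = -s^2/(2*z) - Real.log (1-s) := by
    have h01 : hfun 0 1 = -1 := by simp [hfun]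
    have hsz' : s/z = (1-s)⁻¹ := by
      rw [← hsz]
      field_simp
    have hlog : Real.log (s/z) = -Real.log (1-s) := by rw [hsz', Real.log_inv]
    rw [h01]
    unfold hfun
    rw [hlog]
    have harith : -(s/z) + z*(s/z)^2/2 + 1 = -s^2/(2*z) := by
      have e : -(s/z) + z*(s/z)^2/2 + 1 = (-2*s + s^2 + 2*z)/(2*z) := by
        field_simp
      rw [e]
      rw [show -2*s + s^2 + 2*z = -s^2 + 2*(s^2 - s + z) by ring, hs2]
      ring_nf
    linarith [harith]
  rw [← hfin]
  exact Tz
end
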